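/- Define C₁ = {(0, 6n) : n ∈ ℤ}, C₂ = {(1, 2n) : n ∈ ℤ}, C₃ = {(2, 1 + 2n) : n ∈ ℤ}, C₄ = {(3, 1 + 6n) : n ∈ ℤ}. Then for any i ≠ j, any segment from a point of C_i to a point of C_j contains no interior integer points. -/
import Mathlib

lemma bezout_no_interior (a b : ℤ × ℤ) (u v : ℤ)
    (huv : u * (b.1 - a.1) + v * (b.2 - a.2) = 1) :
    ¬ ∃ (c : ℤ × ℤ) (t : ℝ), 0 < t ∧ t < 1 ∧
      (c.1 : ℝ) = a.1 + t * (b.1 - a.1) ∧ (c.2 : ℝ) = a.2 + t * (b.2 - a.2) := by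
  rintro ⟨c, t, h0, h1, hx, hy⟩
  have h : (u : ℝ) * (b.1 - a.1) + v * (b.2 - a.2) = 1 := by exact_mod_cast huv
  have key : ((u * (c.1 - a.1) + v * (c.2 - a.2) : ℤ) : ℝ) = t := by
    push_cast
    linear_combination u * hx + v * hy + t * h
  set N := u * (c.1 - a.1) + v * (c.2 - a.2) with hN
  have hl : (0:ℤ) < N := by exact_mod_cast key ▸ h0
  have hr : N < 1 := by exact_mod_cast key ▸ h1
  omega

/-- With `C₁ = {(0,6n)}`, `C₂ = {(1,2n)}`, `C₃ = {(2,1+2n)}`, `C₄ = {(3,1+6n)}`,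
any segment from a point of `C_i` to a point of `C_j` with `i ≠ j` contains no
interior integer points. -/
theorem segments_between_distinct_classes_no_interior_points
    (C : Fin 4 → Set (ℤ × ℤ))
    (hC0 : C 0 = {p | ∃ n : ℤ, p = (0, 6 * n)})
    (hC1 : C 1 = {p | ∃ n : ℤ, p = (1, 2 * n)})
    (hC2 : C 2 = {p | ∃ n : ℤ, p = (2, 1 + 2 * n)})
    (hC3 : C 3 = {p | ∃ n : ℤ, p = (3, 1 + 6 * n)})
    (i j : Fin 4) (hij : i ≠ j) (a b : ℤ × ℤ) (ha : a ∈ C i) (hb : b ∈ C j) :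
    ¬ ∃ (c : ℤ × ℤ) (t : ℝ), 0 < t ∧ t < 1 ∧
      (c.1 : ℝ) = a.1 + t * (b.1 - a.1) ∧ (c.2 : ℝ) = a.2 + t * (b.2 - a.2) := by
  fin_cases i <;> fin_cases j
  · exact absurd rfl hij
  · obtain ⟨m, rfl⟩ : ∃ n : ℤ, a = (0, 6 * n) := by
      have h : a ∈ C 0 := ha
      rw [hC0] at h; exact h
    obtain ⟨n, rfl⟩ : ∃ n : ℤ, b = (1, 2 * n) := by
      have h : b ∈ C 1 := hb
      rw [hC1] at h; exact h
    exact bezout_no_interior _ _ 1 0 (by ring)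
  · obtain ⟨m, rfl⟩ : ∃ n : ℤ, a = (0, 6 * n) := by
      have h : a ∈ C 0 := ha
      rw [hC0] at h; exact h
    obtain ⟨n, rfl⟩ : ∃ n : ℤ, b = (2, 1 + 2 * n) := by
      have h : b ∈ C 2 := hb
      rw [hC2] at h; exact h
    exact bezout_no_interior _ _ (3*m - n) 1 (by ring)
  · obtain ⟨m, rfl⟩ : ∃ n : ℤ, a = (0, 6 * n) := by
      have h : a ∈ C 0 := ha
      rw [hC0] at h; exact h
    obtain ⟨n, rfl⟩ : ∃ n : ℤ, b = (3, 1 + 6 * n) := by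
      have h : b ∈ C 3 := hb
      rw [hC3] at h; exact h
    exact bezout_no_interior _ _ (2*m - 2*n) 1 (by ring)
  · obtain ⟨m, rfl⟩ : ∃ n : ℤ, a = (1, 2 * n) := by
      have h : a ∈ C 1 := ha
      rw [hC1] at h; exact h
    obtain ⟨n, rfl⟩ : ∃ n : ℤ, b = (0, 6 * n) := by
      have h : b ∈ C 0 := hb
      rw [hC0] at h; exact h
    exact bezout_no_interior _ _ (-1) 0 (by ring)
  · exact absurd rfl hij
  · obtain ⟨m, rfl⟩ : ∃ n : ℤ, a = (1, 2 * n) := by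
      have h : a ∈ C 1 := ha
      rw [hC1] at h; exact h
    obtain ⟨n, rfl⟩ : ∃ n : ℤ, b = (2, 1 + 2 * n) := by
      have h : b ∈ C 2 := hb
      rw [hC2] at h; exact h
    exact bezout_no_interior _ _ 1 0 (by ring)
  · obtain ⟨m, rfl⟩ : ∃ n : ℤ, a = (1, 2 * n) := by
      have h : a ∈ C 1 := ha
      rw [hC1] at h; exact h
    obtain ⟨n, rfl⟩ : ∃ n : ℤ, b = (3, 1 + 6 * n) := by
      have h : b ∈ C 3 := hb
      rw [hC3] at h; exact h
    exact bezout_no_interior _ _ (m - 3*n) 1 (by ring)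
  · obtain ⟨m, rfl⟩ : ∃ n : ℤ, a = (2, 1 + 2 * n) := by
      have h : a ∈ C 2 := ha
      rw [hC2] at h; exact h
    obtain ⟨n, rfl⟩ : ∃ n : ℤ, b = (0, 6 * n) := by
      have h : b ∈ C 0 := hb
      rw [hC0] at h; exact h
    exact bezout_no_interior _ _ (m - 3*n) (-1) (by ring)
  · obtain ⟨m, rfl⟩ : ∃ n : ℤ, a = (2, 1 + 2 * n) := by
      have h : a ∈ C 2 := ha
      rw [hC2] at h; exact h
    obtain ⟨n, rfl⟩ : ∃ n : ℤ, b = (1, 2 * n) := by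
      have h : b ∈ C 1 := hb
      rw [hC1] at h; exact h
    exact bezout_no_interior _ _ (-1) 0 (by ring)
  · exact absurd rfl hij
  · obtain ⟨m, rfl⟩ : ∃ n : ℤ, a = (2, 1 + 2 * n) := by
      have h : a ∈ C 2 := ha
      rw [hC2] at h; exact h
    obtain ⟨n, rfl⟩ : ∃ n : ℤ, b = (3, 1 + 6 * n) := by
      have h : b ∈ C 3 := hb
      rw [hC3] at h; exact h
    exact bezout_no_interior _ _ 1 0 (by ring)
  · obtain ⟨m, rfl⟩ : ∃ n : ℤ, a = (3, 1 + 6 * n) := by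
      have h : a ∈ C 3 := ha
      rw [hC3] at h; exact h
    obtain ⟨n, rfl⟩ : ∃ n : ℤ, b = (0, 6 * n) := by
      have h : b ∈ C 0 := hb
      rw [hC0] at h; exact h
    exact bezout_no_interior _ _ (2*m - 2*n) (-1) (by ring)
  · obtain ⟨m, rfl⟩ : ∃ n : ℤ, a = (3, 1 + 6 * n) := by
      have h : a ∈ C 3 := ha
      rw [hC3] at h; exact h
    obtain ⟨n, rfl⟩ : ∃ n : ℤ, b = (1, 2 * n) := by
      have h : b ∈ C 1 := hb
      rw [hC1] at h; exact h
    exact bezout_no_interior _ _ (3*m - n) (-1) (by ring)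
  · obtain ⟨m, rfl⟩ : ∃ n : ℤ, a = (3, 1 + 6 * n) := by
      have h : a ∈ C 3 := ha
      rw [hC3] at h; exact h
    obtain ⟨n, rfl⟩ : ∃ n : ℤ, b = (2, 1 + 2 * n) := by
      have h : b ∈ C 2 := hb
      rw [hC2] at h; exact h
    exact bezout_no_interior _ _ (-1) 0 (by ring)
  · exact absurd rfl hij
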